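/- Let d ≥ 1 be an integer, q > 12d a real number, and ν ∈ (0, 1 − 6d/q). Set λ_n = √(d/2 + n). Let A : ℕ⁴ → ℂ satisfy the following four bounds for all j, k, l, m ∈ ℕ: Σ_{m'∈ℕ} |A(j,k,l,m')|² ≤ (λ_j λ_k λ_l)^{4d/q}, Σ_{l'∈ℕ} |A(j,k,l',m)|² ≤ (λ_j λ_k λ_m)^{4d/q}, Σ_{k'∈ℕ} |A(j,k',l,m)|² ≤ (λ_j λ_l λ_m)^{4d/q}, and Σ_{j'∈ℕ} |A(j',k,l,m)|² ≤ (λ_k λ_l λ_m)^{4d/q}. Then there exists a constant C > 0, depending only on d, q, ν, such that for all integers 1 ≤ M ≤ N: Σ over all (j,k,l,m) ∈ {0,…,N}⁴ with max(j,k,l,m) > M of (λ_j λ_k λ_l λ_m)^{−2} |A(j,k,l,m)|² ≤ C · M^{−ν}. -/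

import Mathlib

/-- `λ_n = √(d/2 + n)`. -/
noncomputable def lamEig (d n : ℕ) : ℝ := Real.sqrt ((d : ℝ) / 2 + n)

open Finset

lemma lamEig_base_pos {d : ℕ} (hd : 1 ≤ d) (n : ℕ) : 0 < (d:ℝ)/2 + n := by
  have h1 : (1:ℝ) ≤ (d:ℝ) := by exact_mod_cast hd
  have h2 : (0:ℝ) ≤ n := Nat.cast_nonneg n
  linarith

lemma lamEig_pos {d : ℕ} (hd : 1 ≤ d) (n : ℕ) : 0 < lamEig d n :=
  Real.sqrt_pos.mpr (lamEig_base_pos hd n)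

lemma lamEig_rpow {d : ℕ} (hd : 1 ≤ d) (n : ℕ) (t : ℝ) :
    lamEig d n ^ t = ((d:ℝ)/2 + n) ^ (t/2) := by
  rw [lamEig, Real.sqrt_eq_rpow, ← Real.rpow_mul (lamEig_base_pos hd n).le]
  congr 1; ring

lemma lamEig_mono {d : ℕ} {a b : ℕ} (h : a ≤ b) : lamEig d a ≤ lamEig d b := by
  apply Real.sqrt_le_sqrt
  have : (a:ℝ) ≤ b := by exact_mod_cast h
  linarith

lemma lamEig_exp_lt (d : ℕ) (q ν : ℝ) (hq : 12 * (d:ℝ) < q)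
    (hν1 : ν < 1 - 6 * (d:ℝ) / q) : 2*(d:ℝ)/q - 1 - (1-ν)/3 < -1 := by
  have h3 : 2*(d:ℝ)/q = (6*(d:ℝ)/q)/3 := by ring
  linarith

lemma lamEig_key_summable (d : ℕ) (hd : 1 ≤ d) (q ν : ℝ) (hq : 12 * (d:ℝ) < q)
    (hν1 : ν < 1 - 6 * (d:ℝ) / q) :
    Summable (fun n : ℕ => ((d:ℝ)/2 + n) ^ (2*(d:ℝ)/q - 1 - (1-ν)/3)) := by
  set α := 2*(d:ℝ)/q - 1 - (1-ν)/3 with hα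
  have hαlt : α < -1 := lamEig_exp_lt d q ν hq hν1
  rw [← summable_nat_add_iff 1]
  have hsum : Summable (fun n : ℕ => ((n:ℝ)+1) ^ α) := by
    have := (summable_nat_add_iff 1).mpr (Real.summable_nat_rpow.mpr hαlt)
    simpa using this
  apply Summable.of_nonneg_of_le _ _ hsum
  · intro n; positivity
  · intro n
    apply Real.rpow_le_rpow_of_nonpos (by positivity)
    · have h1 : (1:ℝ) ≤ (d:ℝ) := by exact_mod_cast hd
      push_cast
      linarith
    · linarith

lemma ite_le_four {Q P1 P2 P3 P4 : Prop} [Decidable Q] [Decidable P1] [Decidable P2]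
    [Decidable P3] [Decidable P4] {x : ℝ} (hx : 0 ≤ x) (h : Q → P1 ∨ P2 ∨ P3 ∨ P4) :
    (if Q then x else 0) ≤ (if P1 then x else 0) + (if P2 then x else 0)
      + (if P3 then x else 0) + (if P4 then x else 0) := by
  have n1 : 0 ≤ (if P1 then x else 0) := by split <;> simp [hx]
  have n2 : 0 ≤ (if P2 then x else 0) := by split <;> simp [hx]
  have n3 : 0 ≤ (if P3 then x else 0) := by split <;> simp [hx]
  have n4 : 0 ≤ (if P4 then x else 0) := by split <;> simp [hx]
  by_cases hQ : Q
  · rcases h hQ with h1 | h2 | h3 | h4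
    · rw [if_pos hQ, if_pos h1]; linarith
    · rw [if_pos hQ, if_pos h2]; linarith
    · rw [if_pos hQ, if_pos h3]; linarith
    · rw [if_pos hQ, if_pos h4]; linarith
  · rw [if_neg hQ]; linarith

lemma maxFourCases {M j k l m : ℕ} (h : M < max (max j k) (max l m)) :
    (M < j ∧ k ≤ j ∧ l ≤ j ∧ m ≤ j) ∨ (M < k ∧ j ≤ k ∧ l ≤ k ∧ m ≤ k)
    ∨ (M < l ∧ j ≤ l ∧ k ≤ l ∧ m ≤ l) ∨ (M < m ∧ j ≤ m ∧ k ≤ m ∧ l ≤ m) := by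
  omega

lemma lamEig_case_bound (d : ℕ) (hd : 1 ≤ d) (q ν : ℝ) (hq : 12 * (d:ℝ) < q) (hν0 : 0 < ν)
    (hν1 : ν < 1 - 6*(d:ℝ)/q) (S : ℝ)
    (hS : ∀ F : Finset ℕ, ∑ n ∈ F, ((d:ℝ)/2 + n) ^ (2*(d:ℝ)/q - 1 - (1-ν)/3) ≤ S)
    (B : ℕ → ℕ → ℕ → ℕ → ℂ)
    (hB : ∀ j k l : ℕ, ∀ F : Finset ℕ, ∑ m' ∈ F, ‖B j k l m'‖^2
        ≤ (lamEig d j * lamEig d k * lamEig d l) ^ (4*(d:ℝ)/q))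
    (M N : ℕ) (hM : 1 ≤ M) :
    ∑ j ∈ range (N+1), ∑ k ∈ range (N+1), ∑ l ∈ range (N+1), ∑ m ∈ range (N+1),
      (if M < m ∧ j ≤ m ∧ k ≤ m ∧ l ≤ m then
        (lamEig d j * lamEig d k * lamEig d l * lamEig d m) ^ (-2:ℝ) * ‖B j k l m‖^2 else 0)
      ≤ S^3 * (M:ℝ)^(-ν) := by
  set γ : ℝ := 2*(1-ν)/3 with hγ
  set c : ℕ → ℝ := fun n => lamEig d n ^ (-2 - γ : ℝ) with hc
  set t : ℕ → ℝ := fun n => ((d:ℝ)/2 + n) ^ (2*(d:ℝ)/q - 1 - (1-ν)/3) with ht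
  have hq0 : (0:ℝ) < q := by
    have : (0:ℝ) ≤ 12 * d := by positivity
    linarith
  have hν1' : ν < 1 := by
    have : 0 < 6 * (d:ℝ) / q := by
      have h1 : (1:ℝ) ≤ (d:ℝ) := by exact_mod_cast hd
      positivity
    linarith
  have hγ0 : 0 < γ := by rw [hγ]; linarith
  have hnn : ∀ n, 0 ≤ lamEig d n := fun n => (lamEig_pos hd n).le
  have hcpos : ∀ n, 0 < c n := fun n => Real.rpow_pos_of_pos (lamEig_pos hd n) _
  have hMν : 0 ≤ (M:ℝ)^(-ν) := Real.rpow_nonneg (Nat.cast_nonneg M) _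
  have key1 : ∀ j k l m : ℕ,
      (if M < m ∧ j ≤ m ∧ k ≤ m ∧ l ≤ m then
        (lamEig d j * lamEig d k * lamEig d l * lamEig d m) ^ (-2:ℝ) * ‖B j k l m‖^2 else 0)
      ≤ (M:ℝ)^(-ν) * (c j * c k * c l) * ‖B j k l m‖^2 := by
    intro j k l m
    split_ifs with h
    · apply mul_le_mul_of_nonneg_right _ (by positivity)
      obtain ⟨hMm, hjm, hkm, hlm⟩ := h
      have hg : ∀ n, 0 ≤ lamEig d n ^ (-γ) := fun n => Real.rpow_nonneg (hnn n) _
      have h2 : ∀ n, 0 ≤ lamEig d n ^ (-2:ℝ) := fun n => Real.rpow_nonneg (hnn n) _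
      have e1 : (lamEig d j * lamEig d k * lamEig d l * lamEig d m) ^ (-2:ℝ)
          = lamEig d j ^ (-2:ℝ) * lamEig d k ^ (-2:ℝ) * lamEig d l ^ (-2:ℝ)
            * lamEig d m ^ (-2:ℝ) := by
        rw [Real.mul_rpow (mul_nonneg (mul_nonneg (hnn j) (hnn k)) (hnn l)) (hnn m),
          Real.mul_rpow (mul_nonneg (hnn j) (hnn k)) (hnn l),
          Real.mul_rpow (hnn j) (hnn k)]
      have e2 : lamEig d m ^ (-2:ℝ) = lamEig d m ^ (-2*ν) * lamEig d m ^ (-γ)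
          * lamEig d m ^ (-γ) * lamEig d m ^ (-γ) := by
        rw [← Real.rpow_add (lamEig_pos hd m), ← Real.rpow_add (lamEig_pos hd m),
          ← Real.rpow_add (lamEig_pos hd m)]
        congr 1; rw [hγ]; ring
      have b1 : lamEig d m ^ (-2*ν) ≤ (M:ℝ)^(-ν) := by
        rw [lamEig_rpow hd m, show (-2*ν)/2 = -ν by ring]
        have hMpos : (0:ℝ) < M := by exact_mod_cast hM
        have hMle : (M:ℝ) ≤ (d:ℝ)/2 + m := by
          have h1 : (M:ℝ) ≤ (m:ℝ) := by exact_mod_cast hMm.le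
          have h2 : (0:ℝ) ≤ (d:ℝ)/2 := by positivity
          linarith
        exact Real.rpow_le_rpow_of_nonpos hMpos hMle (by linarith)
      have b2 : ∀ a : ℕ, a ≤ m → lamEig d m ^ (-γ) ≤ lamEig d a ^ (-γ) := fun a ham =>
        Real.rpow_le_rpow_of_nonpos (lamEig_pos hd a) (lamEig_mono ham) (by linarith)
      have hcspec : ∀ n, c n = lamEig d n ^ (-2:ℝ) * lamEig d n ^ (-γ) := by
        intro n
        rw [hc]; dsimp only
        rw [← Real.rpow_add (lamEig_pos hd n), show (-2:ℝ) + -γ = -2 - γ from by ring]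
      have hmain : lamEig d m ^ (-2*ν) * lamEig d m ^ (-γ) * lamEig d m ^ (-γ)
            * lamEig d m ^ (-γ)
          ≤ (M:ℝ)^(-ν) * lamEig d j ^ (-γ) * lamEig d k ^ (-γ) * lamEig d l ^ (-γ) := by
        apply mul_le_mul _ (b2 l hlm) (hg m)
          (mul_nonneg (mul_nonneg hMν (hg j)) (hg k))
        apply mul_le_mul _ (b2 k hkm) (hg m) (mul_nonneg hMν (hg j))
        exact mul_le_mul b1 (b2 j hjm) (hg m) hMν
      calc (lamEig d j * lamEig d k * lamEig d l * lamEig d m) ^ (-2:ℝ)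
          = lamEig d j ^ (-2:ℝ) * lamEig d k ^ (-2:ℝ) * lamEig d l ^ (-2:ℝ) *
            (lamEig d m ^ (-2*ν) * lamEig d m ^ (-γ) * lamEig d m ^ (-γ)
              * lamEig d m ^ (-γ)) := by rw [e1, e2]
        _ ≤ lamEig d j ^ (-2:ℝ) * lamEig d k ^ (-2:ℝ) * lamEig d l ^ (-2:ℝ) *
            ((M:ℝ)^(-ν) * lamEig d j ^ (-γ) * lamEig d k ^ (-γ) * lamEig d l ^ (-γ)) := by
            apply mul_le_mul_of_nonneg_left hmain
              (mul_nonneg (mul_nonneg (h2 j) (h2 k)) (h2 l))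
        _ = (M:ℝ)^(-ν) * (c j * c k * c l) := by
            rw [hcspec j, hcspec k, hcspec l]; ring
    · have hB0 : (0:ℝ) ≤ ‖B j k l m‖^2 := by positivity
      have := mul_nonneg (mul_nonneg hMν
        (mul_nonneg (mul_nonneg (hcpos j).le (hcpos k).le) (hcpos l).le)) hB0
      linarith [this]
  have ht' : ∀ n, c n * lamEig d n ^ (4*(d:ℝ)/q) = t n := by
    intro n
    rw [hc, ht]; dsimp only
    rw [← Real.rpow_add (lamEig_pos hd n), lamEig_rpow hd n]
    congr 1
    rw [hγ]; ring
  set R := range (N+1) with hR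
  calc ∑ j ∈ R, ∑ k ∈ R, ∑ l ∈ R, ∑ m ∈ R,
      (if M < m ∧ j ≤ m ∧ k ≤ m ∧ l ≤ m then
        (lamEig d j * lamEig d k * lamEig d l * lamEig d m) ^ (-2:ℝ) * ‖B j k l m‖^2 else 0)
      ≤ ∑ j ∈ R, ∑ k ∈ R, ∑ l ∈ R, ∑ m ∈ R,
          (M:ℝ)^(-ν) * (c j * c k * c l) * ‖B j k l m‖^2 := by
        refine sum_le_sum fun j _ => sum_le_sum fun k _ => sum_le_sum fun l _ =>
          sum_le_sum fun m _ => key1 j k l m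
    _ = ∑ j ∈ R, ∑ k ∈ R, ∑ l ∈ R,
          (M:ℝ)^(-ν) * (c j * c k * c l) * ∑ m ∈ R, ‖B j k l m‖^2 := by
        simp only [← Finset.mul_sum]
    _ ≤ ∑ j ∈ R, ∑ k ∈ R, ∑ l ∈ R,
          (M:ℝ)^(-ν) * (c j * c k * c l) * ((lamEig d j * lamEig d k * lamEig d l)
            ^ (4*(d:ℝ)/q)) := by
        refine sum_le_sum fun j _ => sum_le_sum fun k _ => sum_le_sum fun l _ => ?_
        refine mul_le_mul_of_nonneg_left (hB j k l R) ?_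
        exact mul_nonneg hMν
          (mul_nonneg (mul_nonneg (hcpos j).le (hcpos k).le) (hcpos l).le)
    _ = ∑ j ∈ R, ∑ k ∈ R, ∑ l ∈ R, (M:ℝ)^(-ν) * (t j * (t k * t l)) := by
        refine sum_congr rfl fun j _ => sum_congr rfl fun k _ => sum_congr rfl fun l _ => ?_
        rw [Real.mul_rpow (mul_nonneg (hnn j) (hnn k)) (hnn l),
          Real.mul_rpow (hnn j) (hnn k),
          ← ht' j, ← ht' k, ← ht' l]
        ring
    _ = (M:ℝ)^(-ν) * ((∑ n ∈ R, t n) * ((∑ n ∈ R, t n) * (∑ n ∈ R, t n))) := by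
        simp only [← Finset.mul_sum, ← Finset.sum_mul]
    _ ≤ S^3 * (M:ℝ)^(-ν) := by
        have hT0 : 0 ≤ ∑ n ∈ R, t n := by
          refine sum_nonneg fun n _ => ?_
          rw [ht]
          exact Real.rpow_nonneg (lamEig_base_pos hd n).le _
        have hTS : ∑ n ∈ R, t n ≤ S := hS R
        have h3 : (∑ n ∈ R, t n) * ((∑ n ∈ R, t n) * (∑ n ∈ R, t n)) ≤ S^3 := by
          nlinarith [pow_le_pow_left₀ hT0 hTS 3]
        rw [mul_comm]
        exact mul_le_mul_of_nonneg_right h3 hMν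


/-- Let `d ≥ 1`, `q > 12d`, `ν ∈ (0, 1 − 6d/q)`. There is a constant `C > 0` depending only
on `d, q, ν` such that: if `A : ℕ⁴ → ℂ` satisfies the four directional bounds
`Σ_{m'} |A(j,k,l,m')|² ≤ (λ_j λ_k λ_l)^{4d/q}` (and the three analogous ones), then for all
`1 ≤ M ≤ N`, the sum over `(j,k,l,m) ∈ {0,…,N}⁴` with `max(j,k,l,m) > M` of
`(λ_j λ_k λ_l λ_m)^{−2} |A(j,k,l,m)|²` is at most `C M^{−ν}`. -/
theorem renormalized_energy_cauchy_bound (d : ℕ) (hd : 1 ≤ d) (q ν : ℝ)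
    (hq : 12 * (d : ℝ) < q) (hν0 : 0 < ν) (hν1 : ν < 1 - 6 * (d : ℝ) / q) :
    ∃ C : ℝ, 0 < C ∧ ∀ A : ℕ → ℕ → ℕ → ℕ → ℂ,
      (∀ j k l : ℕ, ∀ F : Finset ℕ,
          ∑ m' ∈ F, ‖A j k l m'‖ ^ 2
            ≤ (lamEig d j * lamEig d k * lamEig d l) ^ (4 * (d : ℝ) / q)) →
      (∀ j k m : ℕ, ∀ F : Finset ℕ,
          ∑ l' ∈ F, ‖A j k l' m‖ ^ 2
            ≤ (lamEig d j * lamEig d k * lamEig d m) ^ (4 * (d : ℝ) / q)) →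
      (∀ j l m : ℕ, ∀ F : Finset ℕ,
          ∑ k' ∈ F, ‖A j k' l m‖ ^ 2
            ≤ (lamEig d j * lamEig d l * lamEig d m) ^ (4 * (d : ℝ) / q)) →
      (∀ k l m : ℕ, ∀ F : Finset ℕ,
          ∑ j' ∈ F, ‖A j' k l m‖ ^ 2
            ≤ (lamEig d k * lamEig d l * lamEig d m) ^ (4 * (d : ℝ) / q)) →
      ∀ M N : ℕ, 1 ≤ M → M ≤ N →
        ∑ p ∈ (Finset.range (N + 1) ×ˢ Finset.range (N + 1) ×ˢ Finset.range (N + 1)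
              ×ˢ Finset.range (N + 1)).filter
            (fun p : ℕ × ℕ × ℕ × ℕ => M < max (max p.1 p.2.1) (max p.2.2.1 p.2.2.2)),
          (lamEig d p.1 * lamEig d p.2.1 * lamEig d p.2.2.1 * lamEig d p.2.2.2) ^ (-2 : ℝ)
            * ‖A p.1 p.2.1 p.2.2.1 p.2.2.2‖ ^ 2
        ≤ C * (M : ℝ) ^ (-ν) := by
  have hsum := lamEig_key_summable d hd q ν hq hν1
  set S := ∑' n : ℕ, ((d:ℝ)/2 + n) ^ (2*(d:ℝ)/q - 1 - (1-ν)/3) with hSdef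
  have hS : ∀ F : Finset ℕ, ∑ n ∈ F, ((d:ℝ)/2 + n) ^ (2*(d:ℝ)/q - 1 - (1-ν)/3) ≤ S :=
    fun F => Summable.sum_le_tsum F (fun n _ => Real.rpow_nonneg (lamEig_base_pos hd n).le _) hsum
  have hS0 : 0 ≤ S := tsum_nonneg fun n => Real.rpow_nonneg (lamEig_base_pos hd n).le _
  refine ⟨4*S^3+1, by positivity, ?_⟩
  intro A hA1 hA2 hA3 hA4 M N hM hMN
  have hnn : ∀ n, 0 ≤ lamEig d n := fun n => (lamEig_pos hd n).le
  have hMν : 0 ≤ (M:ℝ)^(-ν) := Real.rpow_nonneg (Nat.cast_nonneg M) _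
  set R := range (N+1) with hR
  -- the four cases
  have case4 := lamEig_case_bound d hd q ν hq hν0 hν1 S hS A
    (fun j k l F => hA1 j k l F) M N hM
  have case3 := lamEig_case_bound d hd q ν hq hν0 hν1 S hS (fun a b c e => A a b e c)
    (fun a b c F => hA2 a b c F) M N hM
  have case2 := lamEig_case_bound d hd q ν hq hν0 hν1 S hS (fun a b c e => A a e b c)
    (fun a b c F => hA3 a b c F) M N hM
  have case1 := lamEig_case_bound d hd q ν hq hν0 hν1 S hS (fun a b c e => A e a b c)
    (fun a b c F => hA4 a b c F) M N hM
  have fnn : ∀ j k l m : ℕ,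
      0 ≤ (lamEig d j * lamEig d k * lamEig d l * lamEig d m) ^ (-2:ℝ) * ‖A j k l m‖^2 :=
    fun j k l m => mul_nonneg
      (Real.rpow_nonneg (mul_nonneg (mul_nonneg (mul_nonneg (hnn j) (hnn k)) (hnn l)) (hnn m)) _)
      (by positivity)
  -- reordered equalities
  have eq1 : ∑ j ∈ R, ∑ k ∈ R, ∑ l ∈ R, ∑ m ∈ R,
        (if M < j ∧ k ≤ j ∧ l ≤ j ∧ m ≤ j then
          (lamEig d j * lamEig d k * lamEig d l * lamEig d m) ^ (-2:ℝ) * ‖A j k l m‖^2 else 0)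
      = ∑ a ∈ R, ∑ b ∈ R, ∑ c ∈ R, ∑ e ∈ R,
        (if M < e ∧ a ≤ e ∧ b ≤ e ∧ c ≤ e then
          (lamEig d a * lamEig d b * lamEig d c * lamEig d e) ^ (-2:ℝ) * ‖A e a b c‖^2
          else 0) := by
    rw [Finset.sum_comm]
    refine sum_congr rfl fun a _ => ?_
    rw [Finset.sum_comm]
    refine sum_congr rfl fun b _ => ?_
    rw [Finset.sum_comm]
    refine sum_congr rfl fun c _ => sum_congr rfl fun e _ => ?_
    rw [show lamEig d e * lamEig d a * lamEig d b * lamEig d c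
      = lamEig d a * lamEig d b * lamEig d c * lamEig d e by ring]
  have eq2 : ∑ j ∈ R, ∑ k ∈ R, ∑ l ∈ R, ∑ m ∈ R,
        (if M < k ∧ j ≤ k ∧ l ≤ k ∧ m ≤ k then
          (lamEig d j * lamEig d k * lamEig d l * lamEig d m) ^ (-2:ℝ) * ‖A j k l m‖^2 else 0)
      = ∑ a ∈ R, ∑ b ∈ R, ∑ c ∈ R, ∑ e ∈ R,
        (if M < e ∧ a ≤ e ∧ b ≤ e ∧ c ≤ e then
          (lamEig d a * lamEig d b * lamEig d c * lamEig d e) ^ (-2:ℝ) * ‖A a e b c‖^2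
          else 0) := by
    refine sum_congr rfl fun a _ => ?_
    rw [Finset.sum_comm]
    refine sum_congr rfl fun b _ => ?_
    rw [Finset.sum_comm]
    refine sum_congr rfl fun c _ => sum_congr rfl fun e _ => ?_
    rw [show lamEig d a * lamEig d e * lamEig d b * lamEig d c
      = lamEig d a * lamEig d b * lamEig d c * lamEig d e by ring]
  have eq3 : ∑ j ∈ R, ∑ k ∈ R, ∑ l ∈ R, ∑ m ∈ R,
        (if M < l ∧ j ≤ l ∧ k ≤ l ∧ m ≤ l then
          (lamEig d j * lamEig d k * lamEig d l * lamEig d m) ^ (-2:ℝ) * ‖A j k l m‖^2 else 0)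
      = ∑ a ∈ R, ∑ b ∈ R, ∑ c ∈ R, ∑ e ∈ R,
        (if M < e ∧ a ≤ e ∧ b ≤ e ∧ c ≤ e then
          (lamEig d a * lamEig d b * lamEig d c * lamEig d e) ^ (-2:ℝ) * ‖A a b e c‖^2
          else 0) := by
    refine sum_congr rfl fun a _ => sum_congr rfl fun b _ => ?_
    rw [Finset.sum_comm]
    refine sum_congr rfl fun c _ => sum_congr rfl fun e _ => ?_
    rw [show lamEig d a * lamEig d b * lamEig d e * lamEig d c
      = lamEig d a * lamEig d b * lamEig d c * lamEig d e by ring]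
  calc ∑ p ∈ (Finset.range (N + 1) ×ˢ Finset.range (N + 1) ×ˢ Finset.range (N + 1)
              ×ˢ Finset.range (N + 1)).filter
            (fun p : ℕ × ℕ × ℕ × ℕ => M < max (max p.1 p.2.1) (max p.2.2.1 p.2.2.2)),
          (lamEig d p.1 * lamEig d p.2.1 * lamEig d p.2.2.1 * lamEig d p.2.2.2) ^ (-2 : ℝ)
            * ‖A p.1 p.2.1 p.2.2.1 p.2.2.2‖ ^ 2
      = ∑ j ∈ R, ∑ k ∈ R, ∑ l ∈ R, ∑ m ∈ R,
          (if M < max (max j k) (max l m) then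
            (lamEig d j * lamEig d k * lamEig d l * lamEig d m) ^ (-2:ℝ) * ‖A j k l m‖^2
            else 0) := by
        rw [Finset.sum_filter]
        simp only [Finset.sum_product]
        rfl
    _ ≤ ∑ j ∈ R, ∑ k ∈ R, ∑ l ∈ R, ∑ m ∈ R,
          ((if M < j ∧ k ≤ j ∧ l ≤ j ∧ m ≤ j then
            (lamEig d j * lamEig d k * lamEig d l * lamEig d m) ^ (-2:ℝ) * ‖A j k l m‖^2 else 0)
          + (if M < k ∧ j ≤ k ∧ l ≤ k ∧ m ≤ k then
            (lamEig d j * lamEig d k * lamEig d l * lamEig d m) ^ (-2:ℝ) * ‖A j k l m‖^2 else 0)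
          + (if M < l ∧ j ≤ l ∧ k ≤ l ∧ m ≤ l then
            (lamEig d j * lamEig d k * lamEig d l * lamEig d m) ^ (-2:ℝ) * ‖A j k l m‖^2 else 0)
          + (if M < m ∧ j ≤ m ∧ k ≤ m ∧ l ≤ m then
            (lamEig d j * lamEig d k * lamEig d l * lamEig d m) ^ (-2:ℝ) * ‖A j k l m‖^2
            else 0)) := by
        refine sum_le_sum fun j _ => sum_le_sum fun k _ => sum_le_sum fun l _ =>
          sum_le_sum fun m _ => ite_le_four (fnn j k l m) maxFourCases
    _ = (∑ j ∈ R, ∑ k ∈ R, ∑ l ∈ R, ∑ m ∈ R,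
          (if M < j ∧ k ≤ j ∧ l ≤ j ∧ m ≤ j then
            (lamEig d j * lamEig d k * lamEig d l * lamEig d m) ^ (-2:ℝ) * ‖A j k l m‖^2 else 0))
        + (∑ j ∈ R, ∑ k ∈ R, ∑ l ∈ R, ∑ m ∈ R,
          (if M < k ∧ j ≤ k ∧ l ≤ k ∧ m ≤ k then
            (lamEig d j * lamEig d k * lamEig d l * lamEig d m) ^ (-2:ℝ) * ‖A j k l m‖^2 else 0))
        + (∑ j ∈ R, ∑ k ∈ R, ∑ l ∈ R, ∑ m ∈ R,
          (if M < l ∧ j ≤ l ∧ k ≤ l ∧ m ≤ l then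
            (lamEig d j * lamEig d k * lamEig d l * lamEig d m) ^ (-2:ℝ) * ‖A j k l m‖^2 else 0))
        + (∑ j ∈ R, ∑ k ∈ R, ∑ l ∈ R, ∑ m ∈ R,
          (if M < m ∧ j ≤ m ∧ k ≤ m ∧ l ≤ m then
            (lamEig d j * lamEig d k * lamEig d l * lamEig d m) ^ (-2:ℝ) * ‖A j k l m‖^2
            else 0)) := by
        simp only [Finset.sum_add_distrib]
    _ ≤ S^3 * (M:ℝ)^(-ν) + S^3 * (M:ℝ)^(-ν) + S^3 * (M:ℝ)^(-ν) + S^3 * (M:ℝ)^(-ν) := by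
        exact add_le_add (add_le_add (add_le_add
          (le_of_eq_of_le eq1 case1) (le_of_eq_of_le eq2 case2))
          (le_of_eq_of_le eq3 case3)) case4
    _ ≤ (4*S^3+1) * (M:ℝ)^(-ν) := by nlinarith [hMν]
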